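/- Let γ ∈ (−2, −1), f₀ the uniform probability measure on the unit circle, and for n ≥ 1 let K_n(v, v_*) = min(|v−v_*|^γ, n). Then sup_{v ∈ ℝ²} ∫_{ℝ²} (|v−v_*|^γ − K_n(v,v_*)) · |v−v_*| · 1_{v_* ≠ v} f₀(dv_*) ≤ C n^{(2+γ)/(2γ)} for some constant C depending only on γ, and in particular this supremum tends to 0 as n → ∞. -/

import Mathlib

open MeasureTheory Filter

open MeasureTheory Filter Real Complex
open scoped ENNReal

noncomputable def E (x : ℝ) : ℂ := Complex.exp (x * Complex.I)

lemma normE (x : ℝ) : ‖E x‖ = 1 := Complex.norm_exp_ofReal_mul_I x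

lemma E_add (x y : ℝ) : E (x + y) = E x * E y := by
  rw [E, E, E, ← Complex.exp_add]; push_cast; ring_nf

lemma E_two_pi : E (2*π) = 1 := by
  rw [E]; push_cast; exact Complex.exp_two_pi_mul_I

lemma norm_E_sub_one (x : ℝ) : ‖E x - 1‖ = 2 * |Real.sin (x/2)| := by
  have h : E x - 1 = (Real.cos x - 1 : ℝ) + (Real.sin x : ℝ) * Complex.I := by
    rw [E, Complex.exp_mul_I]; push_cast; ring
  rw [h, Complex.norm_def, Complex.normSq_add_mul_I]
  have hs := Real.sin_sq_eq_half_sub (x/2)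
  rw [show 2*(x/2) = x by ring] at hs
  have h2 : (Real.cos x - 1)^2 + Real.sin x ^2 = (2 * |Real.sin (x/2)|)^2 := by
    rw [mul_pow, _root_.sq_abs]
    nlinarith [Real.sin_sq x]
  rw [h2, Real.sqrt_sq (by positivity)]

lemma chord_lb (x : ℝ) (hx : |x| ≤ π) : 2/π * |x| ≤ ‖E x - 1‖ := by
  rw [norm_E_sub_one]
  have hd : |x/2| ≤ π/2 := by rw [abs_div, _root_.abs_two]; linarith
  have h := Real.mul_abs_le_abs_sin hd
  rw [abs_div, _root_.abs_two] at h
  calc 2/π * |x| = 2 * (2/π * (|x|/2)) := by ring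
    _ ≤ 2 * |Real.sin (x/2)| := by linarith

lemma norm_E_sub (θ α : ℝ) : ‖E θ - E α‖ = ‖E (θ-α) - 1‖ := by
  have : E θ - E α = E α * (E (θ-α) - 1) := by
    rw [mul_sub, ← E_add, mul_one]; ring_nf
  rw [this, norm_mul, normE, one_mul]

lemma E_add_two_pi (x : ℝ) : E (x + 2*π) = E x := by
  rw [E_add, E_two_pi, mul_one]

lemma E_sub_two_pi (x : ℝ) : E (x - 2*π) = E x := by
  rw [← E_add_two_pi (x - 2*π)]; congr 1; ring

lemma circle_chord (θ α : ℝ) (hθ : θ ∈ Set.Ioc (-π) π) (hα : α ∈ Set.Ioc (-π) π) :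
    ∃ d : ℝ, (d = θ-α ∨ d = θ-α-2*π ∨ d = θ-α+2*π) ∧ |d| ≤ π ∧ (α ≠ θ → d ≠ 0) ∧
      2/π*|d| ≤ ‖E θ - E α‖ := by
  obtain ⟨hθ1, hθ2⟩ := hθ; obtain ⟨hα1, hα2⟩ := hα
  have hpi := Real.pi_pos
  rw [norm_E_sub]
  rcases le_or_gt (θ-α) (-π) with h1 | h1
  · refine ⟨θ-α+2*π, Or.inr (Or.inr rfl), by rw [abs_le]; constructor <;> linarith,
      fun _ h => by linarith, ?_⟩
    have harg : E (θ - α) = E (θ-α+2*π) := by rw [← E_sub_two_pi (θ-α+2*π)]; congr 1; ring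
    rw [harg]
    exact chord_lb _ (by rw [abs_le]; constructor <;> linarith)
  · rcases le_or_gt (θ-α) π with h2 | h2
    · exact ⟨θ-α, Or.inl rfl, by rw [abs_le]; constructor <;> linarith,
        fun hne => sub_ne_zero_of_ne (Ne.symm hne),
        chord_lb _ (by rw [abs_le]; constructor <;> linarith)⟩
    · refine ⟨θ-α-2*π, Or.inr (Or.inl rfl), by rw [abs_le]; constructor <;> linarith,
        fun _ h => by linarith, ?_⟩
      have harg : E (θ - α) = E (θ-α-2*π) := by rw [← E_add_two_pi (θ-α-2*π)]; congr 1; ring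
      rw [harg]
      exact chord_lb _ (by rw [abs_le]; constructor <;> linarith)

lemma meas_rpow (q : ℝ) : Measurable (fun x : ℝ => x ^ q) := by measurability

lemma translate_bound (q : ℝ) (hq0 : q < 0) (hq1 : -1 < q) :
    ∃ K : ℝ≥0∞, K ≠ ⊤ ∧ ∀ c : ℝ, ∫⁻ α in Set.Ioc (-π) π,
      ENNReal.ofReal (|α - c| ^ q) ≤ K := by
  set g : ℝ → ℝ≥0∞ :=
    (Set.Icc (-1:ℝ) 1).indicator (fun x => ENNReal.ofReal (|x|^q)) with hg
  have hgm : Measurable g := by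
    exact Measurable.indicator ((meas_rpow q).comp measurable_abs).ennreal_ofReal measurableSet_Icc
  set L : ℝ≥0∞ := ∫⁻ x, g x with hLdef
  have hL : L ≠ ⊤ := by
    have habs : IntegrableOn (fun x:ℝ => |x|^q) (Set.Icc (-1) 1) := by
      rw [integrableOn_Icc_iff_integrableOn_Ioc]
      have hsplit : Set.Ioc (-1:ℝ) 1 = Set.Ioc (-1) 0 ∪ Set.Ioc 0 1 := by
        rw [Set.Ioc_union_Ioc_eq_Ioc] <;> norm_num
      rw [hsplit]
      apply IntegrableOn.union
      · have h2 : IntervalIntegrable (fun x:ℝ => (-x)^q) volume (-1) 0 := by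
          have := (intervalIntegral.intervalIntegrable_rpow' (a := 1) (b := 0) hq1)
          rw [IntervalIntegrable.iff_comp_neg] at this
          simpa using this
        have h3 : IntegrableOn (fun x:ℝ => (-x)^q) (Set.Ioc (-1) 0) :=
          (intervalIntegrable_iff_integrableOn_Ioc_of_le (by norm_num)).1 h2
        exact h3.congr_fun (fun x hx => by rw [abs_of_nonpos hx.2]) measurableSet_Ioc
      · have h3 : IntegrableOn (fun x:ℝ => x^q) (Set.Ioc 0 1) :=
          (intervalIntegrable_iff_integrableOn_Ioc_of_le (by norm_num)).1
            (intervalIntegral.intervalIntegrable_rpow' hq1)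
        exact h3.congr_fun (fun x hx => by rw [abs_of_pos hx.1]) measurableSet_Ioc
    have := habs.lintegral_lt_top
    rw [hLdef, hg, lintegral_indicator measurableSet_Icc _]
    exact this.ne
  refine ⟨L + ENNReal.ofReal (2*π), by
    exact ENNReal.add_ne_top.2 ⟨hL, ENNReal.ofReal_ne_top⟩, fun c => ?_⟩
  have hpt : ∀ α : ℝ, ENNReal.ofReal (|α - c| ^ q) ≤ g (α - c) + 1 := by
    intro α
    rcases le_or_gt (|α - c|) 1 with h | h
    · have hmem : α - c ∈ Set.Icc (-1:ℝ) 1 := by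
        constructor <;> [linarith [neg_abs_le (α-c)]; linarith [le_abs_self (α-c)]]
      rw [hg, Set.indicator_of_mem hmem]
      exact le_self_add
    · have h1 : |α - c| ^ q ≤ 1 :=
        Real.rpow_le_one_of_one_le_of_nonpos h.le hq0.le
      calc ENNReal.ofReal (|α - c| ^ q) ≤ ENNReal.ofReal 1 := ENNReal.ofReal_le_ofReal h1
        _ = 1 := ENNReal.ofReal_one
        _ ≤ g (α - c) + 1 := le_add_self
  calc ∫⁻ α in Set.Ioc (-π) π, ENNReal.ofReal (|α - c| ^ q)
      ≤ ∫⁻ α in Set.Ioc (-π) π, (g (α - c) + 1) := lintegral_mono hpt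
    _ = (∫⁻ α in Set.Ioc (-π) π, g (α - c)) + volume (Set.Ioc (-π) π) := by
        rw [lintegral_add_right _ measurable_const]
        simp
    _ ≤ (∫⁻ α, g (α - c)) + ENNReal.ofReal (2*π) := by
        apply add_le_add (setLIntegral_le_lintegral _ _)
        rw [Real.volume_Ioc]
        exact ENNReal.ofReal_le_ofReal (by ring_nf; linarith [Real.pi_pos])
    _ = L + ENNReal.ofReal (2*π) := by
        congr 1
        simp_rw [sub_eq_add_neg]
        have h2 := (MeasurableEquiv.addRight (-c)).measurableEmbedding.lintegral_map
          (μ := volume) g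
        rw [show ⇑(MeasurableEquiv.addRight (-c)) = fun x => x + (-c) from rfl,
          map_add_right_eq_self volume (-c)] at h2
        exact h2.symm

lemma circle_int_bound (q : ℝ) (hq0 : q < 0) (hq1 : -1 < q) :
    ∃ B : ℝ≥0∞, B ≠ ⊤ ∧ ∀ v : ℂ, ∫⁻ α in Set.Ioc (-π) π,
      ENNReal.ofReal (‖v - E α‖ ^ q) ≤ B := by
  obtain ⟨K, hK, hKb⟩ := translate_bound q hq0 hq1
  refine ⟨ENNReal.ofReal ((1/π)^q) * (K + K + K) + ENNReal.ofReal (2*π),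
    ENNReal.add_ne_top.2 ⟨ENNReal.mul_ne_top ENNReal.ofReal_ne_top
      (by simp [ENNReal.add_ne_top, hK]), ENNReal.ofReal_ne_top⟩, fun v => ?_⟩
  rcases eq_or_ne v 0 with rfl | hv
  · have : ∀ α : ℝ, ENNReal.ofReal (‖(0:ℂ) - E α‖ ^ q) = 1 := by
      intro α
      rw [zero_sub, norm_neg, normE, Real.one_rpow, ENNReal.ofReal_one]
    simp only [this]
    rw [lintegral_const, Measure.restrict_apply MeasurableSet.univ, Set.univ_inter,
      Real.volume_Ioc, one_mul]
    exact le_add_left (ENNReal.ofReal_le_ofReal (by ring_nf; linarith [Real.pi_pos]))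
  · set u : ℂ := (‖v‖ : ℂ)⁻¹ * v with hu
    have hvn : (0:ℝ) < ‖v‖ := norm_pos_iff.2 hv
    have hun : ‖u‖ = 1 := by
      rw [hu, norm_mul, norm_inv, Complex.norm_real, Real.norm_eq_abs,
        abs_of_pos hvn, inv_mul_cancel₀ hvn.ne']
    set θ : ℝ := Complex.arg u with hθ
    have hθIoc : θ ∈ Set.Ioc (-π) π := Complex.arg_mem_Ioc u
    have huE : E θ = u := by
      have h := Complex.norm_mul_exp_arg_mul_I u
      rw [hun] at h
      simpa [E] using h
    -- a.e. pointwise bound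
    have hae : ∀ᵐ α ∂(volume.restrict (Set.Ioc (-π) π)),
        ENNReal.ofReal (‖v - E α‖ ^ q) ≤ ENNReal.ofReal ((1/π)^q) *
          (ENNReal.ofReal (|α - θ|^q) + ENNReal.ofReal (|α - (θ-2*π)|^q)
            + ENNReal.ofReal (|α - (θ+2*π)|^q)) := by
      have hne : ∀ᵐ α ∂(volume.restrict (Set.Ioc (-π) π)), α ≠ θ := by
        refine ae_iff.2 ?_
        have hset : {α : ℝ | ¬ α ≠ θ} = {θ} := by ext x; simp
        rw [hset]
        exact le_antisymm (le_trans (Measure.restrict_le_self _) (measure_singleton θ).le)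
          (zero_le)
      filter_upwards [hne, ae_restrict_mem measurableSet_Ioc] with α hαθ hαIoc
      obtain ⟨d, hdc, hdle, hdne, hdchord⟩ := circle_chord θ α hθIoc hαIoc
      have hd0 : d ≠ 0 := hdne hαθ
      rw [huE] at hdchord
      have htri : ‖u - E α‖ ≤ 2 * ‖v - E α‖ := by
        have h1 : ‖u - v‖ = |1 - ‖v‖| := by
          have he : u - v = (((‖v‖)⁻¹ - 1 : ℝ) : ℂ) * v := by rw [hu]; push_cast; ring
          have hne0 : ‖v‖ ≠ 0 := hvn.ne'
          have hmul : (‖v‖⁻¹ - 1) * ‖v‖ = 1 - ‖v‖ := by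
            generalize hA : ‖v‖ = a at hne0 ⊢
            field_simp
          rw [he, norm_mul, Complex.norm_real, Real.norm_eq_abs]
          calc |‖v‖⁻¹ - 1| * ‖v‖ = |‖v‖⁻¹ - 1| * |‖v‖| := by rw [abs_of_pos hvn]
            _ = |(‖v‖⁻¹ - 1) * ‖v‖| := (abs_mul _ _).symm
            _ = |1 - ‖v‖| := by rw [hmul]
        have h2 : |1 - ‖v‖| ≤ ‖v - E α‖ := by
          have h5 := abs_norm_sub_norm_le (E α) v
          rw [normE] at h5
          calc |1 - ‖v‖| ≤ ‖E α - v‖ := h5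
            _ = ‖v - E α‖ := norm_sub_rev _ _
        have h3 : u - E α = (u - v) + (v - E α) := by ring
        rw [h3]
        refine (norm_add_le _ _).trans ?_
        rw [h1]; linarith
      have hlb : (1/π) * |d| ≤ ‖v - E α‖ := by
        have h4 : 2 * ((1/π)*|d|) ≤ 2 * ‖v - E α‖ := by
          calc 2*((1/π)*|d|) = 2/π*|d| := by ring
            _ ≤ ‖u - E α‖ := hdchord
            _ ≤ 2 * ‖v - E α‖ := htri
        linarith
      have hpos : (0:ℝ) < (1/π) * |d| :=
        mul_pos (by positivity) (abs_pos.2 hd0)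
      have hrq : ‖v - E α‖^q ≤ (1/π)^q * |d|^q := by
        rw [← Real.mul_rpow (by positivity) (abs_nonneg d)]
        exact Real.rpow_le_rpow_of_nonpos hpos hlb hq0.le
      have hkey : ∀ c : ℝ, |d| = |α - c| →
          ENNReal.ofReal (‖v - E α‖ ^ q) ≤ ENNReal.ofReal ((1/π)^q) * ENNReal.ofReal (|α - c|^q) := by
        intro c hc
        rw [← ENNReal.ofReal_mul (by positivity), ← hc]
        exact ENNReal.ofReal_le_ofReal hrq
      rcases hdc with h | h | h
      · refine (hkey θ (by rw [h, abs_sub_comm])).trans ?_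
        exact mul_le_mul_right (le_self_add.trans le_self_add) _
      · refine (hkey (θ-2*π) (by rw [h, abs_sub_comm]; ring_nf)).trans ?_
        exact mul_le_mul_right ((le_add_self).trans le_self_add) _
      · refine (hkey (θ+2*π) (by rw [h, abs_sub_comm]; ring_nf)).trans ?_
        exact mul_le_mul_right le_add_self _
    calc ∫⁻ α in Set.Ioc (-π) π, ENNReal.ofReal (‖v - E α‖ ^ q)
        ≤ ∫⁻ α in Set.Ioc (-π) π, ENNReal.ofReal ((1/π)^q) *
          (ENNReal.ofReal (|α - θ|^q) + ENNReal.ofReal (|α - (θ-2*π)|^q)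
            + ENNReal.ofReal (|α - (θ+2*π)|^q)) := lintegral_mono_ae hae
      _ = ENNReal.ofReal ((1/π)^q) * ∫⁻ α in Set.Ioc (-π) π,
          (ENNReal.ofReal (|α - θ|^q) + ENNReal.ofReal (|α - (θ-2*π)|^q)
            + ENNReal.ofReal (|α - (θ+2*π)|^q)) :=
          lintegral_const_mul' _ _ ENNReal.ofReal_ne_top
      _ ≤ ENNReal.ofReal ((1/π)^q) * (K + K + K) := by
          apply mul_le_mul_right
          have hm : ∀ c : ℝ, Measurable (fun α : ℝ => ENNReal.ofReal (|α - c|^q)) :=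
            fun c => ((meas_rpow q).comp (measurable_id.sub measurable_const).abs).ennreal_ofReal
          rw [lintegral_add_right _ (hm _), lintegral_add_right _ (hm _)]
          exact add_le_add (add_le_add (hKb θ) (hKb (θ-2*π))) (hKb (θ+2*π))
      _ ≤ _ := le_self_add

lemma cutoff_ptwise {γ : ℝ} (hγ2 : -2 < γ) (hγ1 : γ < -1) {n : ℝ} (hn : 1 ≤ n)
    {r : ℝ} (hr : 0 < r) :
    (r ^ γ - min (r ^ γ) n) * r ≤ n ^ ((2+γ)/(2*γ)) * r ^ (γ/2) := by
  have hn0 : (0:ℝ) < n := by linarith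
  have hγne : γ ≠ 0 := by linarith
  rcases le_total (r^γ) n with h | h
  · rw [min_eq_left h, sub_self, zero_mul]
    positivity
  · rw [min_eq_right h]
    have hrn : r ≤ n ^ (1/γ) := by
      have h2 := Real.rpow_le_rpow_of_nonpos hn0 h
        (by apply le_of_lt; apply div_neg_of_pos_of_neg <;> linarith : 1/γ ≤ 0)
      rwa [← Real.rpow_mul hr.le, mul_one_div, div_self hγne, Real.rpow_one] at h2
    have hexp : r ^ (1 + γ/2) ≤ n ^ ((2+γ)/(2*γ)) := by
      have h3 : r ^ (1 + γ/2) ≤ (n ^ (1/γ)) ^ (1 + γ/2) :=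
        Real.rpow_le_rpow hr.le hrn (by linarith)
      rw [← Real.rpow_mul hn0.le] at h3
      have he : 1/γ * (1 + γ/2) = (2+γ)/(2*γ) := by
        rw [eq_div_iff (mul_ne_zero two_ne_zero hγne)]
        calc 1/γ*(1+γ/2)*(2*γ) = (γ * (1/γ)) * (2*(1+γ/2)) := by ring
          _ = 2+γ := by rw [mul_one_div_cancel hγne]; ring
      rwa [he] at h3
    calc (r ^ γ - n) * r ≤ r ^ γ * r := by
          have : r ^ γ - n ≤ r ^ γ := by linarith
          exact mul_le_mul_of_nonneg_right this hr.le
      _ = r ^ (γ/2) * r ^ (1 + γ/2) := by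
          rw [← Real.rpow_add hr, show γ/2 + (1 + γ/2) = γ + 1 by ring,
            Real.rpow_add hr, Real.rpow_one]
      _ ≤ r ^ (γ/2) * n ^ ((2+γ)/(2*γ)) :=
          mul_le_mul_of_nonneg_left hexp (Real.rpow_nonneg hr.le _)
      _ = n ^ ((2+γ)/(2*γ)) * r ^ (γ/2) := mul_comm _ _

/-- Cutoff approximation: with `K_n = min(|v-v_*|^γ, n)`,
`sup_v ∫ (|v-v_*|^γ - K_n) |v-v_*| 1_{v_*≠v} f₀(dv_*) ≤ C n^{(2+γ)/(2γ)} → 0`. -/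
theorem stmt15 (γ : ℝ) (hγ : γ ∈ Set.Ioo (-2:ℝ) (-1))
    (f₀ : Measure ℂ)
    (hf₀ : f₀ = (ENNReal.ofReal (2 * Real.pi))⁻¹ •
      Measure.map (fun α : ℝ => Complex.exp (α * Complex.I))
        (volume.restrict (Set.Ioc (-Real.pi) Real.pi))) :
    ∃ C : ℝ, 0 < C ∧
      (∀ n : ℕ, 1 ≤ n → ∀ v : ℂ,
        ∫⁻ w in {w : ℂ | w ≠ v},
            ENNReal.ofReal ((‖v - w‖ ^ γ - min (‖v - w‖ ^ γ) (n : ℝ)) * ‖v - w‖) ∂f₀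
          ≤ ENNReal.ofReal (C * (n : ℝ) ^ ((2 + γ)/(2*γ)))) ∧
      Tendsto (fun n : ℕ => ⨆ v : ℂ,
          ∫⁻ w in {w : ℂ | w ≠ v},
            ENNReal.ofReal ((‖v - w‖ ^ γ - min (‖v - w‖ ^ γ) (n : ℝ)) * ‖v - w‖) ∂f₀)
        atTop (nhds 0) := by
  obtain ⟨hγ2, hγ1⟩ := hγ
  obtain ⟨B, hB, hBb⟩ := circle_int_bound (γ/2) (by linarith) (by linarith)
  set B' : ℝ≥0∞ := (ENNReal.ofReal (2*π))⁻¹ * B with hB'def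
  have hB' : B' ≠ ⊤ := ENNReal.mul_ne_top
    (ENNReal.inv_ne_top.2 (ENNReal.ofReal_pos.2 (by positivity)).ne') hB
  set C : ℝ := B'.toReal + 1 with hCdef
  have hC : 0 < C := by positivity
  have hCge : B' ≤ ENNReal.ofReal C := by
    rw [← ENNReal.ofReal_toReal hB']
    exact ENNReal.ofReal_le_ofReal (by simp [hCdef])
  have hEmeas : Measurable (fun α : ℝ => Complex.exp (α * Complex.I)) :=
    (Complex.continuous_ofReal.mul continuous_const).cexp.measurable
  have key : ∀ n : ℕ, 1 ≤ n → ∀ v : ℂ,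
      ∫⁻ w in {w : ℂ | w ≠ v},
          ENNReal.ofReal ((‖v - w‖ ^ γ - min (‖v - w‖ ^ γ) (n : ℝ)) * ‖v - w‖) ∂f₀
        ≤ ENNReal.ofReal (C * (n : ℝ) ^ ((2 + γ)/(2*γ))) := by
    intro n hn v
    have hn1 : (1:ℝ) ≤ (n:ℝ) := by exact_mod_cast hn
    have hmeas_set : MeasurableSet {w : ℂ | w ≠ v} := (measurableSet_singleton v).compl
    have hFmeas : Measurable (fun w : ℂ => ENNReal.ofReal (‖v - w‖ ^ (γ/2))) :=
      ((meas_rpow _).comp (measurable_const.sub measurable_id).norm).ennreal_ofReal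
    have hne : (0:ℝ) ≤ (n:ℝ) ^ ((2 + γ)/(2*γ)) :=
      Real.rpow_nonneg (by linarith) _
    calc ∫⁻ w in {w : ℂ | w ≠ v},
          ENNReal.ofReal ((‖v - w‖ ^ γ - min (‖v - w‖ ^ γ) (n : ℝ)) * ‖v - w‖) ∂f₀
        ≤ ∫⁻ w in {w : ℂ | w ≠ v},
            ENNReal.ofReal ((n:ℝ) ^ ((2 + γ)/(2*γ))) * ENNReal.ofReal (‖v - w‖ ^ (γ/2)) ∂f₀ := by
          refine lintegral_mono_ae ?_
          filter_upwards [ae_restrict_mem hmeas_set] with w hw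
          have hr : (0:ℝ) < ‖v - w‖ := by
            rw [norm_pos_iff, sub_ne_zero]
            exact Ne.symm hw
          rw [← ENNReal.ofReal_mul hne]
          exact ENNReal.ofReal_le_ofReal (cutoff_ptwise hγ2 hγ1 hn1 hr)
      _ = ENNReal.ofReal ((n:ℝ) ^ ((2 + γ)/(2*γ))) *
            ∫⁻ w in {w : ℂ | w ≠ v}, ENNReal.ofReal (‖v - w‖ ^ (γ/2)) ∂f₀ :=
          lintegral_const_mul' _ _ ENNReal.ofReal_ne_top
      _ ≤ ENNReal.ofReal ((n:ℝ) ^ ((2 + γ)/(2*γ))) *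
            ∫⁻ w, ENNReal.ofReal (‖v - w‖ ^ (γ/2)) ∂f₀ :=
          mul_le_mul_right (setLIntegral_le_lintegral _ _) _
      _ = ENNReal.ofReal ((n:ℝ) ^ ((2 + γ)/(2*γ))) *
            ((ENNReal.ofReal (2*π))⁻¹ *
              ∫⁻ α in Set.Ioc (-π) π, ENNReal.ofReal (‖v - E α‖ ^ (γ/2))) := by
          rw [hf₀, lintegral_smul_measure, lintegral_map hFmeas hEmeas]
          rfl
      _ ≤ ENNReal.ofReal ((n:ℝ) ^ ((2 + γ)/(2*γ))) * B' :=
          mul_le_mul_right (mul_le_mul_right (hBb v) _) _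
      _ ≤ ENNReal.ofReal ((n:ℝ) ^ ((2 + γ)/(2*γ))) * ENNReal.ofReal C :=
          mul_le_mul_right hCge _
      _ = ENNReal.ofReal (C * (n : ℝ) ^ ((2 + γ)/(2*γ))) := by
          rw [← ENNReal.ofReal_mul hne, mul_comm]
  refine ⟨C, hC, key, ?_⟩
  have he_neg : (2+γ)/(2*γ) < 0 := div_neg_of_pos_of_neg (by linarith) (by linarith)
  have h2 : Tendsto (fun x:ℝ => x ^ ((2+γ)/(2*γ))) atTop (nhds 0) := by
    simpa using tendsto_rpow_neg_atTop (y := -((2+γ)/(2*γ))) (by linarith)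
  have h1 : Tendsto (fun n:ℕ => C * (n:ℝ) ^ ((2+γ)/(2*γ))) atTop (nhds 0) := by
    simpa using (h2.comp tendsto_natCast_atTop_atTop).const_mul C
  have upper : Tendsto (fun n:ℕ => ENNReal.ofReal (C * (n:ℝ) ^ ((2+γ)/(2*γ)))) atTop (nhds 0) := by
    simpa using ENNReal.tendsto_ofReal h1
  refine tendsto_of_tendsto_of_tendsto_of_le_of_le' tendsto_const_nhds upper
    (Eventually.of_forall (fun n => zero_le)) ?_
  filter_upwards [eventually_ge_atTop 1] with n hn
  exact iSup_le (fun v => key n hn v)
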